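/- Fix k and suppose: (a) for μ-a.e. θ, p·ψ_k(θ,p) → 0 as p ↑ ς_*; (b) there exist p̄ ∈ [0,ς_*) and a μ-integrable φ : T → [0,∞) with p·ψ_k(θ,p) ≤ φ(θ) for all p ∈ (p̄,ς_*) and μ-a.e. θ; and (c) for μ-a.e. θ, P_k^L(θ,p) → 0 as p_k ↑ ς(θ). Then, holding the other components of p fixed, p_k·|λ_k(p)| → 0 and p_k·|γ_{j,k}(p)| → 0 for every j as p_k ↑ ς_*, and consequently the profit derivative (∂π̂_{f(k)}/∂p_k)(p) = Σ_{j∈J_{f(k)}} (δ_{j,k}λ_j(p) − γ_{j,k}(p))(p_j − c_j) + P_k(p) tends to 0 as p_k ↑ ς_*. -/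

import Mathlib

open MeasureTheory Filter

/-- Under the vanishing assumptions on `ψ_k`, as `p_k ↑ ς_*`
(other prices fixed) one has `p_k |λ_k(p)| → 0`, `p_k |γ_{j,k}(p)| → 0` for all
`j`, and consequently the profit derivative
`(∂π̂_{f(k)}/∂p_k)(p) = Σ_{j∈J_{f(k)}} (δ_{j,k}λ_j(p) − γ_{j,k}(p))(p_j − c_j) + P_k(p)`
tends to `0`.  The filter `comap (↑· : ℝ → EReal) (𝓝[<] ς_*)` encodes
`p_k ↑ ς_*` (it is `atTop` when `ς_* = ∞`). -/
theorem stmt10 {J F : ℕ} {T : Type*} [MeasurableSpace T]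
    (μ : Measure T) [IsProbabilityMeasure μ]
    (w Dw : Fin J → T → ℝ → ℝ) (v : Fin J → T → ℝ)
    (ϑ : T → ℝ) (ς : T → EReal) (hςmeas : Measurable ς)
    (e : Fin J → T → ℝ → ℝ)
    (he : ∀ j θ q, e j θ q =
      if (q : EReal) < ς θ then Real.exp (w j θ q + v j θ) else 0)
    (hmease : ∀ j q, AEStronglyMeasurable (fun θ => e j θ q) μ)
    (hmeasϑ : AEStronglyMeasurable (fun θ => Real.exp (ϑ θ)) μ)
    (hmeasDw : ∀ j q, AEStronglyMeasurable (fun θ => Dw j θ q) μ)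
    (PL : Fin J → T → (Fin J → ℝ) → ℝ)
    (hPLdef : ∀ j θ r, PL j θ r = e j θ (r j) / (Real.exp (ϑ θ) + ∑ i, e i θ (r i)))
    (P : Fin J → (Fin J → ℝ) → ℝ)
    (hPdef : ∀ j r, P j r = ∫ θ, PL j θ r ∂μ)
    (lam : (Fin J → ℝ) → Fin J → ℝ)
    (hlam : ∀ r j, lam r j =
      ∫ θ in {θ | (r j : EReal) < ς θ}, Dw j θ (r j) * PL j θ r ∂μ)
    (gam : (Fin J → ℝ) → Fin J → Fin J → ℝ)
    (hgam : ∀ r j k', gam r j k' =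
      ∫ θ in {θ | (r j : EReal) < ς θ ∧ (r k' : EReal) < ς θ},
        PL j θ r * PL k' θ r * Dw k' θ (r k') ∂μ)
    (ψ : Fin J → T → ℝ → ℝ)
    (hψ : ∀ i θ q, ψ i θ q = if (q : EReal) < ς θ then
      |Dw i θ q| * (Real.exp (w i θ q + v i θ) /
        (Real.exp (ϑ θ) + Real.exp (w i θ q + v i θ))) else 0)
    (firm : Fin J → Fin F) (c : Fin J → ℝ)
    (p : Fin J → ℝ) (hp : ∀ j, 0 < p j ∧ (p j : EReal) < essSup ς μ)
    (k : Fin J)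
    -- assumption (a): p ψ_k(θ,p) → 0 as p ↑ ς_*, μ-a.e.
    (ha : ∀ᵐ θ ∂μ, Tendsto (fun q : ℝ => q * ψ k θ q)
      (comap (fun q : ℝ => (q : EReal)) (nhdsWithin (essSup ς μ) (Set.Iio (essSup ς μ))))
      (nhds 0))
    -- assumption (b): p ψ_k(θ,p) is dominated by an integrable φ for p ∈ (p̄, ς_*)
    (hb : ∃ pbar : ℝ, 0 ≤ pbar ∧ (pbar : EReal) < essSup ς μ ∧
      ∃ φ : T → ℝ, Integrable φ μ ∧
        ∀ᵐ θ ∂μ, ∀ q : ℝ, pbar < q → (q : EReal) < essSup ς μ → q * ψ k θ q ≤ φ θ)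
    -- assumption (c): P_k^L(θ,p) → 0 as p_k ↑ ς(θ), μ-a.e.
    (hc : ∀ᵐ θ ∂μ, Tendsto (fun q : ℝ => PL k θ (Function.update p k q))
      (comap (fun q : ℝ => (q : EReal)) (nhdsWithin (ς θ) (Set.Iio (ς θ)))) (nhds 0)) :
    Tendsto (fun q : ℝ => q * |lam (Function.update p k q) k|)
      (comap (fun q : ℝ => (q : EReal)) (nhdsWithin (essSup ς μ) (Set.Iio (essSup ς μ))))
      (nhds 0) ∧
    (∀ j, Tendsto (fun q : ℝ => q * |gam (Function.update p k q) j k|)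
      (comap (fun q : ℝ => (q : EReal)) (nhdsWithin (essSup ς μ) (Set.Iio (essSup ς μ))))
      (nhds 0)) ∧
    Tendsto (fun q : ℝ =>
      (∑ j ∈ Finset.univ.filter (fun j => firm j = firm k),
        ((if j = k then lam (Function.update p k q) j else 0)
            - gam (Function.update p k q) j k)
          * (Function.update p k q j - c j))
        + P k (Function.update p k q))
      (comap (fun q : ℝ => (q : EReal)) (nhdsWithin (essSup ς μ) (Set.Iio (essSup ς μ))))
      (nhds 0) := by
  
  classical
  obtain ⟨pbar, hpbar0, hpbarS, φ, hφint, hφbound⟩ := hb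
  set S := essSup ς μ with hSdef
  set l := comap (fun q : ℝ => (q : EReal)) (nhdsWithin S (Set.Iio S)) with hldef
  -- eventually in l, q is in (b, S) for any b < S
  have hev : ∀ b : EReal, b < S → ∀ᶠ q : ℝ in l, b < (q : EReal) ∧ (q : EReal) < S := by
    intro b hb
    have hmem : Set.Ioo b S ∈ nhdsWithin S (Set.Iio S) := by
      rw [mem_nhdsWithin]
      exact ⟨Set.Ioi b, isOpen_Ioi, hb, fun x hx => ⟨hx.1, hx.2⟩⟩
    exact eventually_of_mem (preimage_mem_comap hmem) (fun q hq => hq)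
  have hposev : ∀ᶠ q : ℝ in l, 0 < q := by
    filter_upwards [hev (p k : EReal) (hp k).2] with q hq
    have : p k < q := by exact_mod_cast hq.1
    linarith [(hp k).1]
  -- basic positivity facts
  have he_nonneg : ∀ i θ x, 0 ≤ e i θ x := by
    intro i θ x; rw [he]; split
    · exact (Real.exp_pos _).le
    · exact le_refl 0
  have hD_pos : ∀ θ (r : Fin J → ℝ), 0 < Real.exp (ϑ θ) + ∑ i, e i θ (r i) := by
    intro θ r
    have : 0 ≤ ∑ i, e i θ (r i) := Finset.sum_nonneg fun i _ => he_nonneg i θ (r i)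
    linarith [Real.exp_pos (ϑ θ)]
  have hPL_nonneg : ∀ j θ r, 0 ≤ PL j θ r := by
    intro j θ r; rw [hPLdef]
    exact div_nonneg (he_nonneg _ _ _) (hD_pos θ r).le
  have hPL_le_one : ∀ j θ r, PL j θ r ≤ 1 := by
    intro j θ r; rw [hPLdef]
    rw [div_le_one (hD_pos θ r)]
    have h1 : e j θ (r j) ≤ ∑ i, e i θ (r i) :=
      Finset.single_le_sum (fun i _ => he_nonneg i θ (r i)) (Finset.mem_univ j)
    linarith [Real.exp_pos (ϑ θ)]
  have hψ_nonneg : ∀ θ q, 0 ≤ ψ k θ q := by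
    intro θ q; rw [hψ]; split
    · exact mul_nonneg (abs_nonneg _)
        (div_nonneg (Real.exp_pos _).le (by positivity))
    · exact le_refl 0
  -- PL_k bounded by the ψ fraction
  have hPLk_bound : ∀ θ q, |Dw k θ q| * PL k θ (Function.update p k q) ≤ ψ k θ q := by
    intro θ q
    rw [hψ]
    by_cases h : (q : EReal) < ς θ
    · rw [if_pos h]
      have hek : e k θ q = Real.exp (w k θ q + v k θ) := by rw [he, if_pos h]
      have hPLk : PL k θ (Function.update p k q) =
          e k θ q / (Real.exp (ϑ θ) + ∑ i, e i θ (Function.update p k q i)) := by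
        rw [hPLdef, Function.update_self]
      refine mul_le_mul_of_nonneg_left ?_ (abs_nonneg _)
      rw [hPLk, hek]
      have hsum : Real.exp (w k θ q + v k θ) ≤ ∑ i, e i θ (Function.update p k q i) := by
        have := Finset.single_le_sum (f := fun i => e i θ (Function.update p k q i))
          (fun i _ => he_nonneg i θ _) (Finset.mem_univ k)
        simpa only [Function.update_self, hek] using this
      gcongr
    · rw [if_neg h]
      have : PL k θ (Function.update p k q) = 0 := by
        rw [hPLdef, Function.update_self, he, if_neg h, zero_div]
      rw [this, mul_zero]
  -- measurability of PL
  have hPLmeas : ∀ (j : Fin J) (r : Fin J → ℝ), AEStronglyMeasurable (fun θ => PL j θ r) μ := by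
    intro j r
    have heq : (fun θ => PL j θ r)
        = fun θ => e j θ (r j) / (Real.exp (ϑ θ) + ∑ i, e i θ (r i)) :=
      funext fun θ => hPLdef j θ r
    rw [heq]
    exact ((hmease j (r j)).aemeasurable.div
      (hmeasϑ.add (Finset.aestronglyMeasurable_fun_sum _
        fun i _ => hmease i (r i))).aemeasurable).aestronglyMeasurable
  -- generic dominated convergence lemma
  have hmain : ∀ g : ℝ → T → ℝ, (∀ q, AEStronglyMeasurable (g q) μ) →
      (∀ θ q, |g q θ| ≤ ψ k θ q) →
      Tendsto (fun q => ∫ θ, q * g q θ ∂μ) l (nhds 0) := by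
    intro g hgm hgb
    have h0 : (0:ℝ) = ∫ _θ, (0:ℝ) ∂μ := by simp
    rw [h0]
    apply tendsto_integral_filter_of_dominated_convergence φ
    · exact Eventually.of_forall fun q => (hgm q).const_mul q
    · filter_upwards [hev (pbar : EReal) hpbarS] with q hq
      filter_upwards [hφbound] with θ hθ
      have hq1 : pbar < q := by exact_mod_cast hq.1
      have hq0 : (0:ℝ) ≤ q := le_trans hpbar0 hq1.le
      calc ‖q * g q θ‖ = q * |g q θ| := by
            rw [Real.norm_eq_abs, abs_mul, abs_of_nonneg hq0]
        _ ≤ q * ψ k θ q := mul_le_mul_of_nonneg_left (hgb θ q) hq0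
        _ ≤ φ θ := hθ q hq1 hq.2
    · exact hφint
    · filter_upwards [ha] with θ hθ
      apply squeeze_zero_norm' _ hθ
      filter_upwards [hposev] with q hq
      rw [Real.norm_eq_abs, abs_mul, abs_of_pos hq]
      exact mul_le_mul_of_nonneg_left (hgb θ q) hq.le
  -- lam as a full-space integral
  have hlam_eq : ∀ q : ℝ, lam (Function.update p k q) k =
      ∫ θ, Dw k θ q * PL k θ (Function.update p k q) ∂μ := by
    intro q
    have h1 := hlam (Function.update p k q) k
    rw [Function.update_self] at h1
    rw [h1]
    apply setIntegral_eq_integral_of_forall_compl_eq_zero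
    intro θ hθ
    have hnot : ¬ ((q : EReal) < ς θ) := hθ
    have hz : PL k θ (Function.update p k q) = 0 := by
      rw [hPLdef, Function.update_self, he, if_neg hnot, zero_div]
    rw [hz, mul_zero]
  -- gam as a full-space integral
  have hgam_eq : ∀ (j : Fin J) (q : ℝ), gam (Function.update p k q) j k =
      ∫ θ, PL j θ (Function.update p k q) * PL k θ (Function.update p k q) * Dw k θ q ∂μ := by
    intro j q
    have h1 := hgam (Function.update p k q) j k
    rw [Function.update_self] at h1
    rw [h1]
    apply setIntegral_eq_integral_of_forall_compl_eq_zero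
    intro θ hθ
    rw [Set.mem_setOf_eq, not_and_or] at hθ
    rcases hθ with h | h
    · have hz : PL j θ (Function.update p k q) = 0 := by
        rw [hPLdef, he, if_neg h, zero_div]
      rw [hz, zero_mul, zero_mul]
    · have hz : PL k θ (Function.update p k q) = 0 := by
        rw [hPLdef, Function.update_self, he, if_neg h, zero_div]
      rw [hz, mul_zero, zero_mul]
  -- q * lam → 0
  have hqlam : Tendsto (fun q : ℝ => q * lam (Function.update p k q) k) l (nhds 0) := by
    have hm := hmain (fun q θ => Dw k θ q * PL k θ (Function.update p k q))
      (fun q => (hmeasDw k q).mul (hPLmeas k _))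
      (fun θ q => by
        rw [abs_mul, abs_of_nonneg (hPL_nonneg k θ _)]
        exact hPLk_bound θ q)
    exact hm.congr fun q => by rw [integral_const_mul, ← hlam_eq]
  -- q * gam → 0
  have hqgam : ∀ j, Tendsto (fun q : ℝ => q * gam (Function.update p k q) j k) l (nhds 0) := by
    intro j
    have hm := hmain
      (fun q θ => PL j θ (Function.update p k q) * PL k θ (Function.update p k q) * Dw k θ q)
      (fun q => ((hPLmeas j _).mul (hPLmeas k _)).mul (hmeasDw k q))
      (fun θ q => by
        have h1 := hPLk_bound θ q
        have h2 := hPL_nonneg j θ (Function.update p k q)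
        have h3 := hPL_le_one j θ (Function.update p k q)
        have h4 := hPL_nonneg k θ (Function.update p k q)
        have h5 := abs_nonneg (Dw k θ q)
        rw [abs_mul, abs_mul, abs_of_nonneg h2, abs_of_nonneg h4]
        nlinarith [mul_nonneg h4 h5])
    exact hm.congr fun q => by rw [integral_const_mul, ← hgam_eq]
  -- absolute-value versions
  have habs : ∀ f : ℝ → ℝ, Tendsto (fun q => q * f q) l (nhds 0) →
      Tendsto (fun q => q * |f q|) l (nhds 0) := by
    intro f hf
    have h1 : Tendsto (fun q => |q * f q|) l (nhds 0) := by simpa using hf.abs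
    refine h1.congr' ?_
    filter_upwards [hposev] with q hq
    rw [abs_mul, abs_of_pos hq]
  -- removing the factor q
  have hto0 : ∀ f : ℝ → ℝ, Tendsto (fun q => q * f q) l (nhds 0) →
      Tendsto f l (nhds 0) := by
    intro f hf
    have hg : Tendsto (fun q => (p k)⁻¹ * |q * f q|) l (nhds 0) := by
      have := hf.abs.const_mul (p k)⁻¹
      simpa using this
    apply squeeze_zero_norm' _ hg
    filter_upwards [hev (p k : EReal) (hp k).2] with q hq
    have hpq : p k < q := by exact_mod_cast hq.1
    rw [Real.norm_eq_abs, le_inv_mul_iff₀ (hp k).1, abs_mul]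
    exact mul_le_mul_of_nonneg_right (hpq.le.trans (le_abs_self q)) (abs_nonneg _)
  have hlam0 := hto0 _ hqlam
  have hgam0 : ∀ j, Tendsto (fun q : ℝ => gam (Function.update p k q) j k) l (nhds 0) :=
    fun j => hto0 _ (hqgam j)
  -- P_k → 0
  have hP : Tendsto (fun q : ℝ => P k (Function.update p k q)) l (nhds 0) := by
    have h0 : (0:ℝ) = ∫ _θ, (0:ℝ) ∂μ := by simp
    have heq : (fun q : ℝ => P k (Function.update p k q))
        = fun q => ∫ θ, PL k θ (Function.update p k q) ∂μ := funext fun q => hPdef k _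
    rw [heq, h0]
    apply tendsto_integral_filter_of_dominated_convergence (fun _ => (1:ℝ))
    · exact Eventually.of_forall fun q => hPLmeas k _
    · refine Eventually.of_forall fun q => Eventually.of_forall fun θ => ?_
      rw [Real.norm_eq_abs, abs_of_nonneg (hPL_nonneg k θ _)]
      exact hPL_le_one k θ _
    · exact integrable_const 1
    · have hSle : ∀ᵐ θ ∂μ, ς θ ≤ S := ae_le_essSup
      filter_upwards [hc, hSle] with θ hθ hθS
      rcases lt_or_eq_of_le hθS with hlt | heqS
      · refine tendsto_const_nhds.congr' ?_
        filter_upwards [hev (ς θ) hlt] with q hq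
        have hnot : ¬ ((q : EReal) < ς θ) := not_lt.mpr hq.1.le
        rw [hPLdef, Function.update_self, he, if_neg hnot, zero_div]
      · rw [heqS] at hθ
        exact hθ
  -- individual terms of the profit-derivative sum
  have hterm : ∀ j : Fin J, Tendsto (fun q : ℝ =>
      ((if j = k then lam (Function.update p k q) j else 0)
        - gam (Function.update p k q) j k)
        * (Function.update p k q j - c j)) l (nhds 0) := by
    intro j
    by_cases hjk : j = k
    · subst hjk
      simp only [eq_self_iff_true, if_true, Function.update_self]
      have h1 : Tendsto (fun q : ℝ => q * lam (Function.update p j q) j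
          - c j * lam (Function.update p j q) j
          - (q * gam (Function.update p j q) j j
            - c j * gam (Function.update p j q) j j)) l (nhds 0) := by
        have := ((hqlam.sub (hlam0.const_mul (c j))).sub
          ((hqgam j).sub ((hgam0 j).const_mul (c j))))
        simpa using this
      exact h1.congr fun q => by ring
    · simp only [if_neg hjk, Function.update_of_ne hjk, zero_sub]
      have := ((hgam0 j).neg).mul_const (p j - c j)
      simpa using this
  refine ⟨habs _ hqlam, fun j => habs _ (hqgam j), ?_⟩
  have hsum := tendsto_finset_sum (Finset.univ.filter fun j => firm j = firm k)
      (fun j _ => hterm j)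
  have hfin := hsum.add hP
  simpa using hfin
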